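/- The multi-occupation field is invariant under circular translation of based loops: if l is a based loop of duration t (a càdlàg function l: [0,t] → S with l(0) = l(t)) and Θ_r l is its circular translation by r ∈ [0,t), then for every bounded measurable f: S^n → ℝ, ⟨Θ_r l, f⟩ = ⟨l, f⟩, where ⟨l,f⟩ = Σ_{j=0}^{n-1} ∫_{0<s^1<⋯<s^n<t} f(r_j(l(s^1),…,l(s^n))) ds^1⋯ds^n. -/

import Mathlib

open Filter Topology MeasureTheory Set

variable {S : Type*} [MetricSpace S]

/-- A based loop, represented by its periodic extension to all of `ℝ`:
a càdlàg function `f : ℝ → S` of period `len > 0`. -/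
structure BasedLoop (S : Type*) [MetricSpace S] where
  f : ℝ → S
  len : ℝ
  len_pos : 0 < len
  periodic : ∀ u, f (u + len) = f u
  rightCont : ∀ u, Tendsto f (𝓝[>] u) (𝓝 (f u))
  leftLim : ∀ u, ∃ y, Tendsto f (𝓝[<] u) (𝓝 y)

/-- `lam` is an increasing bijection of `[0,1]` onto itself. -/
def IncBij (lam : ℝ → ℝ) : Prop :=
  StrictMonoOn lam (Icc 0 1) ∧ BijOn lam (Icc 0 1) (Icc 0 1) ∧ lam 0 = 0 ∧ lam 1 = 1

/-- `sup_{s<t} |log ((lam t - lam s)/(t-s))|` over `0 ≤ s < t ≤ 1`. -/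
noncomputable def supLog (lam : ℝ → ℝ) : ℝ :=
  sSup {x | ∃ s t : ℝ, 0 ≤ s ∧ s < t ∧ t ≤ 1 ∧ x = |Real.log ((lam t - lam s) / (t - s))|}

/-- The Skorokhod-type distance on (normalized) paths over `[0,1]`. -/
noncomputable def skorDist (f g : ℝ → S) : ℝ :=
  sInf {x | ∃ lam, IncBij lam ∧
    x = supLog lam + sSup {y | ∃ u ∈ Icc (0:ℝ) 1, y = dist (f (lam u)) (g u)}}

/-- Normalization of a based loop to duration 1. -/
noncomputable def BasedLoop.normalized (l : BasedLoop S) : ℝ → S := fun u => l.f (l.len * u)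

/-- The distance `D` on based loops. -/
noncomputable def loopDist (l1 l2 : BasedLoop S) : ℝ :=
  |l1.len - l2.len| + skorDist l1.normalized l2.normalized

/-- Circular translation `Θ_r` of a based loop. -/
def BasedLoop.shift (l : BasedLoop S) (r : ℝ) : BasedLoop S where
  f := fun u => l.f (u + r)
  len := l.len
  len_pos := l.len_pos
  periodic := fun u => by simpa [add_right_comm] using l.periodic (u + r)
  rightCont := fun u => by
    have h : Tendsto (fun u' : ℝ => u' + r) (𝓝[>] u) (𝓝[>] (u + r)) := by
      apply tendsto_nhdsWithin_of_tendsto_nhds_of_eventually_within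
      · exact ((continuous_id.add continuous_const).tendsto u).mono_left nhdsWithin_le_nhds
      · filter_upwards [self_mem_nhdsWithin] with x hx
        exact mem_Ioi.mpr (by linarith [mem_Ioi.mp hx])
    exact (l.rightCont (u + r)).comp h
  leftLim := fun u => by
    obtain ⟨y, hy⟩ := l.leftLim (u + r)
    refine ⟨y, hy.comp ?_⟩
    apply tendsto_nhdsWithin_of_tendsto_nhds_of_eventually_within
    · exact ((continuous_id.add continuous_const).tendsto u).mono_left nhdsWithin_le_nhds
    · filter_upwards [self_mem_nhdsWithin] with x hx
      exact mem_Iio.mpr (by linarith [mem_Iio.mp hx])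

/-- Equivalence of based loops: identical up to circular translation. -/
def LoopEquiv (l1 l2 : BasedLoop S) : Prop :=
  l1.len = l2.len ∧ ∃ r : ℝ, ∀ u, l1.f (u + r) = l2.f u

instance loopSetoid (S : Type*) [MetricSpace S] : Setoid (BasedLoop S) where
  r := LoopEquiv
  iseqv := by
    constructor
    · exact fun l => ⟨rfl, 0, fun u => by simp⟩
    · rintro a b ⟨hlen, r, hr⟩
      refine ⟨hlen.symm, -r, fun u => ?_⟩
      have h2 := hr (u - r)
      rw [sub_add_cancel] at h2
      rw [h2]; congr 1
    · rintro a b c ⟨hab, r1, h1⟩ ⟨hbc, r2, h2⟩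
      refine ⟨hab.trans hbc, r2 + r1, fun u => ?_⟩
      have := h1 (u + r2)
      rw [show u + (r2 + r1) = u + r2 + r1 by ring, this, h2]

/-- A loop is an equivalence class of based loops modulo circular translation. -/
def Loop (S : Type*) [MetricSpace S] := Quotient (loopSetoid S)

/-- The distance `Dᵒ` on loops. -/
noncomputable def loopDistO (L1 L2 : Loop S) : ℝ :=
  sInf {x | ∃ l1 l2 : BasedLoop S, ⟦l1⟧ = L1 ∧ ⟦l2⟧ = L2 ∧ x = loopDist l1 l2}

/-- The multi-occupation field `⟨l, f⟩` of a (periodically extended) path `l`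
of duration `t`, for `f : Sⁿ → ℝ`. -/
noncomputable def occField (n : ℕ) (l : ℝ → S) (t : ℝ) (f : (Fin n → S) → ℝ) : ℝ :=
  ∑ j : Fin n,
    ∫ s in {s : Fin n → ℝ | (∀ i, s i ∈ Ioo 0 t) ∧ StrictMono s},
      f (fun i => l (s (i + j)))

/-- The multi-occupation field of a loop, computed from a representative. -/
noncomputable def occFieldLoop (n : ℕ) (L : Loop S) (f : (Fin n → S) → ℝ) : ℝ :=
  occField n (Quotient.out L).f (Quotient.out L).len f

/-- Open sets of the loop space for the metric `Dᵒ`. -/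
def IsOpenLoop (A : Set (Loop S)) : Prop :=
  ∀ L ∈ A, ∃ ε > 0, ∀ L', loopDistO L L' < ε → L' ∈ A

/-! ### Auxiliary material for the shift-invariance theorem -/

namespace OccShiftAux

open Fin.NatCast

/-- A càdlàg function is measurable. -/
lemma measurable_basedLoop_f [MeasurableSpace S] [BorelSpace S] (l : BasedLoop S) :
    Measurable l.f := by
  set F : ℕ → ℝ → S := fun k u => l.f ((⌈u * ((k : ℝ) + 1)⌉ : ℤ) / ((k : ℝ) + 1)) with hF
  have hmeas : ∀ k : ℕ, Measurable (F k) := by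
    intro k
    exact (measurable_of_countable (fun z : ℤ => l.f ((z : ℝ) / ((k : ℝ) + 1)))).comp
      ((measurable_id.mul_const _).ceil)
  apply measurable_of_tendsto_metrizable hmeas
  rw [tendsto_pi_nhds]
  intro u
  have hkpos : ∀ k : ℕ, (0 : ℝ) < (k : ℝ) + 1 := fun k => by positivity
  have lower : ∀ k : ℕ, u ≤ (⌈u * ((k : ℝ) + 1)⌉ : ℝ) / ((k : ℝ) + 1) := by
    intro k
    rw [le_div_iff₀ (hkpos k)]
    exact Int.le_ceil _
  have upper : ∀ k : ℕ, (⌈u * ((k : ℝ) + 1)⌉ : ℝ) / ((k : ℝ) + 1) ≤ u + 1 / ((k : ℝ) + 1) := by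
    intro k
    rw [div_le_iff₀ (hkpos k)]
    have h1 := (Int.ceil_lt_add_one (u * ((k : ℝ) + 1))).le
    calc (⌈u * ((k : ℝ) + 1)⌉ : ℝ) ≤ u * ((k : ℝ) + 1) + 1 := h1
      _ = (u + 1 / ((k : ℝ) + 1)) * ((k : ℝ) + 1) := by field_simp
  have key : Tendsto l.f (𝓝[≥] u) (𝓝 (l.f u)) := by
    have h1 : Ici u = insert u (Ioi u) := Set.Ioi_insert.symm
    rw [h1, nhdsWithin_insert]
    exact tendsto_sup.2 ⟨tendsto_pure_nhds l.f u, l.rightCont u⟩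
  have harg : Tendsto (fun k : ℕ => (⌈u * ((k : ℝ) + 1)⌉ : ℝ) / ((k : ℝ) + 1))
      atTop (𝓝[≥] u) := by
    apply tendsto_nhdsWithin_of_tendsto_nhds_of_eventually_within
    · apply tendsto_of_tendsto_of_tendsto_of_le_of_le
        (tendsto_const_nhds (x := u)) ?_ lower upper
      have h2 : Tendsto (fun k : ℕ => u + 1 / ((k : ℝ) + 1)) atTop (𝓝 (u + 0)) :=
        tendsto_const_nhds.add tendsto_one_div_add_atTop_nhds_zero_nat
      simpa using h2
    · exact Eventually.of_forall fun k => lower k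
  exact key.comp harg

variable {n : ℕ}

lemma val_add_natCast [NeZero n] {m : ℕ} (hm : m ≤ n) (p : Fin n) :
    (p + (m : Fin n)).val = if (p : ℕ) < n - m then (p : ℕ) + m else (p : ℕ) + m - n := by
  have hp := p.isLt
  rw [Fin.val_add, Fin.val_natCast]
  rcases eq_or_lt_of_le hm with rfl | hmlt
  · rw [Nat.mod_self, Nat.add_zero, Nat.mod_eq_of_lt hp]
    split_ifs <;> omega
  · rw [Nat.mod_eq_of_lt hmlt]
    split_ifs with h
    · exact Nat.mod_eq_of_lt (by omega)
    · rw [Nat.mod_eq_sub_mod (by omega), Nat.mod_eq_of_lt (by omega)]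

lemma natCast_sub_add [NeZero n] {m : ℕ} (hm : m ≤ n) :
    ((n - m : ℕ) : Fin n) + (m : Fin n) = 0 := by
  rw [← Nat.cast_add, Nat.sub_add_cancel hm, Fin.natCast_self]

lemma neg_natCast [NeZero n] {m : ℕ} (hm : m ≤ n) :
    -(m : Fin n) = ((n - m : ℕ) : Fin n) :=
  neg_eq_of_add_eq_zero_left (natCast_sub_add hm)

/-- The pieces of the ordered open simplex, according to the position `m` where
coordinates cross the level `a`. -/
def cutSet (n : ℕ) (a b : ℝ) (m : ℕ) : Set (Fin n → ℝ) :=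
  {s | StrictMono s ∧ ∀ i : Fin n, s i ∈ (if (i : ℕ) < m then Ioo 0 a else Ioo a b)}

/-- Rotation of coordinates by `m`, followed by the piecewise translation which
realizes a circular shift on each piece. -/
def tmap (n : ℕ) [NeZero n] (a b : ℝ) (m : ℕ) (s : Fin n → ℝ) : Fin n → ℝ :=
  fun p => s (p + (m : Fin n)) + (if (p : ℕ) < n - m then -a else b - a)

lemma tmap_comp [NeZero n] {a b : ℝ} {m : ℕ} (hm : m ≤ n) (s : Fin n → ℝ) :
    tmap n (b - a) b (n - m) (tmap n a b m s) = s := by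
  funext q
  have hq := q.isLt
  have hidx : q + ((n - m : ℕ) : Fin n) + (m : Fin n) = q := by
    rw [add_assoc, natCast_sub_add hm, add_zero]
  have hval := val_add_natCast (Nat.sub_le n m) q
  rw [Nat.sub_sub_self hm] at hval
  simp only [tmap]
  rw [hidx, hval, Nat.sub_sub_self hm]
  split_ifs <;> first | ring1 | (exfalso; omega)

lemma tmap_mapsTo [NeZero n] {a b : ℝ} (ha : 0 < a) (hab : a < b) {m : ℕ} (hm : m ≤ n) :
    MapsTo (tmap n a b m) (cutSet n a b m) (cutSet n (b - a) b (n - m)) := by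
  rintro s ⟨hsm, hmem⟩
  have hbounds : ∀ p : Fin n,
      tmap n a b m s p ∈ (if (p : ℕ) < n - m then Ioo 0 (b - a) else Ioo (b - a) b) := by
    intro p
    have hp := p.isLt
    have hval := val_add_natCast hm p
    have hmem' := hmem (p + (m : Fin n))
    rw [hval] at hmem'
    rcases lt_or_ge (p : ℕ) (n - m) with h | h
    · rw [if_pos h] at hmem' ⊢
      rw [if_neg (by omega)] at hmem'
      simp only [tmap]
      rw [if_pos h]
      exact ⟨by linarith [hmem'.1], by linarith [hmem'.2]⟩
    · rw [if_neg (not_lt.2 h)] at hmem' ⊢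
      rw [if_pos (by omega)] at hmem'
      simp only [tmap]
      rw [if_neg (not_lt.2 h)]
      exact ⟨by linarith [hmem'.1], by linarith [hmem'.2]⟩
  refine ⟨?_, hbounds⟩
  intro p q hpq
  have hp := p.isLt
  have hq := q.isLt
  have hpq' : (p : ℕ) < (q : ℕ) := hpq
  have Bp := hbounds p
  have Bq := hbounds q
  have hvp := val_add_natCast hm p
  have hvq := val_add_natCast hm q
  rcases lt_or_ge (p : ℕ) (n - m) with h1 | h1 <;> rcases lt_or_ge (q : ℕ) (n - m) with h2 | h2
  · have hlt : (p + (m : Fin n)) < (q + (m : Fin n)) := by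
      rw [Fin.lt_def, hvp, hvq, if_pos h1, if_pos h2]; omega
    have := hsm hlt
    simp only [tmap]
    rw [if_pos h1, if_pos h2]
    linarith
  · rw [if_pos h1] at Bp
    rw [if_neg (not_lt.2 h2)] at Bq
    linarith [Bp.2, Bq.1]
  · omega
  · have hlt : (p + (m : Fin n)) < (q + (m : Fin n)) := by
      rw [Fin.lt_def, hvp, hvq, if_neg (not_lt.2 h1), if_neg (not_lt.2 h2)]; omega
    have := hsm hlt
    simp only [tmap]
    rw [if_neg (not_lt.2 h1), if_neg (not_lt.2 h2)]
    linarith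

lemma tmap_image [NeZero n] {a b : ℝ} (ha : 0 < a) (hab : a < b) {m : ℕ} (hm : m ≤ n) :
    tmap n a b m '' cutSet n a b m = cutSet n (b - a) b (n - m) := by
  apply Subset.antisymm ((tmap_mapsTo ha hab hm).image_subset)
  intro w hw
  have h1 : tmap n (b - (b - a)) b (n - (n - m)) (tmap n (b - a) b (n - m) w) = w := by
    exact tmap_comp (Nat.sub_le n m) w
  rw [show b - (b - a) = a by ring, Nat.sub_sub_self hm] at h1
  have h2 : tmap n (b - a) b (n - m) w ∈ cutSet n (b - (b - a)) b (n - (n - m)) :=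
    tmap_mapsTo (by linarith) (by linarith) (Nat.sub_le n m) hw
  rw [show b - (b - a) = a by ring, Nat.sub_sub_self hm] at h2
  exact ⟨_, h2, h1⟩

lemma rot_measurePreserving [NeZero n] (c : Fin n) :
    MeasurePreserving (fun s : Fin n → ℝ => fun p => s (p + c)) volume volume := by
  have h := volume_measurePreserving_piCongrLeft (fun _ : Fin n => ℝ) (Equiv.subRight c)
  have he : ⇑(MeasurableEquiv.piCongrLeft (fun _ : Fin n => ℝ) (Equiv.subRight c))
      = fun s : Fin n → ℝ => fun p => s (p + c) := by
    funext s p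
    have h2 := MeasurableEquiv.piCongrLeft_apply_apply (Equiv.subRight c)
      (β := fun _ : Fin n => ℝ) s (p + c)
    simpa using h2
  rwa [he] at h

lemma tmap_measurePreserving [NeZero n] (a b : ℝ) (m : ℕ) :
    MeasurePreserving (tmap n a b m) volume volume := by
  haveI : (volume : Measure (Fin n → ℝ)).IsAddRightInvariant := by
    rw [show (volume : Measure (Fin n → ℝ)) = Measure.pi fun _ => volume from volume_pi]
    infer_instance
  have h1 := rot_measurePreserving (n := n) (m : Fin n)
  have h2 := measurePreserving_add_right (volume : Measure (Fin n → ℝ))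
    (fun p : Fin n => if (p : ℕ) < n - m then -a else b - a)
  exact h2.comp h1

/-- `tmap` as a measurable equivalence. -/
def tmapEquiv [NeZero n] (a b : ℝ) {m : ℕ} (hm : m ≤ n) : (Fin n → ℝ) ≃ᵐ (Fin n → ℝ) where
  toEquiv :=
    { toFun := tmap n a b m
      invFun := tmap n (b - a) b (n - m)
      left_inv := tmap_comp hm
      right_inv := fun w => by
        have h1 := tmap_comp (Nat.sub_le n m) (b := b) (a := b - a) w
        rwa [show b - (b - a) = a by ring, Nat.sub_sub_self hm] at h1 }
  measurable_toFun := by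
    apply measurable_pi_lambda
    intro p
    exact (measurable_pi_apply _).add_const _
  measurable_invFun := by
    apply measurable_pi_lambda
    intro p
    exact (measurable_pi_apply _).add_const _

lemma measurableSet_strictMono : MeasurableSet {s : Fin n → ℝ | StrictMono s} := by
  have h : {s : Fin n → ℝ | StrictMono s}
      = ⋂ (i : Fin n) (j : Fin n) (_ : i < j), {s : Fin n → ℝ | s i < s j} := by
    ext s
    simp only [mem_setOf_eq, mem_iInter]
    exact ⟨fun h i j hij => h hij, fun h a b hab => h a b hab⟩
  rw [h]
  exact MeasurableSet.iInter fun i => MeasurableSet.iInter fun j => MeasurableSet.iInter fun _ =>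
    measurableSet_lt (measurable_pi_apply i) (measurable_pi_apply j)

lemma measurableSet_cutSet (a b : ℝ) (m : ℕ) : MeasurableSet (cutSet n a b m) := by
  have h : cutSet n a b m = {s : Fin n → ℝ | StrictMono s} ∩
      ⋂ i : Fin n, (fun s : Fin n → ℝ => s i) ⁻¹' (if (i : ℕ) < m then Ioo 0 a else Ioo a b) := by
    ext s
    simp only [cutSet, mem_setOf_eq, mem_inter_iff, mem_iInter, mem_preimage]
  rw [h]
  exact measurableSet_strictMono.inter (MeasurableSet.iInter fun i =>
    (measurable_pi_apply i) (by split_ifs <;> exact measurableSet_Ioo))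

lemma cutSet_subset {a b : ℝ} (ha : 0 < a) (hab : a < b) (m : ℕ) :
    cutSet n a b m ⊆ {s : Fin n → ℝ | (∀ i, s i ∈ Ioo 0 b) ∧ StrictMono s} := by
  rintro s ⟨h1, h2⟩
  refine ⟨fun i => ?_, h1⟩
  have h3 := h2 i
  split_ifs at h3 with h
  · exact ⟨h3.1, h3.2.trans hab⟩
  · exact ⟨ha.trans h3.1, h3.2⟩

lemma cutSet_cover [NeZero n] {a b : ℝ} {s : Fin n → ℝ}
    (hs : s ∈ {s : Fin n → ℝ | (∀ i, s i ∈ Ioo 0 b) ∧ StrictMono s}) (hne : ∀ i, s i ≠ a) :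
    ∃ m ≤ n, s ∈ cutSet n a b m := by
  obtain ⟨hmem, hsm⟩ := hs
  set M := Finset.univ.filter (fun i : Fin n => s i < a) with hM
  refine ⟨M.card, le_trans (Finset.card_filter_le _ _) (by simp), hsm, fun i => ?_⟩
  have key : (i : ℕ) < M.card ↔ s i < a := by
    constructor
    · intro h
      by_contra hge
      push_neg at hge
      have hsub : M ⊆ Finset.Iio i := by
        intro j hj
        rw [hM, Finset.mem_filter] at hj
        rw [Finset.mem_Iio]
        exact hsm.lt_iff_lt.1 (lt_of_lt_of_le hj.2 hge)
      have hcard := Finset.card_le_card hsub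
      rw [Fin.card_Iio] at hcard
      omega
    · intro h
      have hsub : Finset.Iic i ⊆ M := by
        intro j hj
        rw [Finset.mem_Iic] at hj
        rw [hM, Finset.mem_filter]
        exact ⟨Finset.mem_univ _, lt_of_le_of_lt (hsm.monotone hj) h⟩
      have hcard := Finset.card_le_card hsub
      rw [Fin.card_Iic] at hcard
      omega
  split_ifs with h
  · exact ⟨(hmem i).1, key.1 h⟩
  · rw [key] at h
    push_neg at h
    exact ⟨lt_of_le_of_ne h (Ne.symm (hne i)), (hmem i).2⟩

lemma cutSet_disjoint [NeZero n] {a b : ℝ} {m m' : ℕ} (hmm : m < m') (hm' : m' ≤ n) :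
    Disjoint (cutSet n a b m) (cutSet n a b m') := by
  rw [Set.disjoint_left]
  rintro s ⟨_, h1⟩ ⟨_, h2⟩
  have hmn : m < n := lt_of_lt_of_le hmm hm'
  have e1 := h1 ⟨m, hmn⟩
  have e2 := h2 ⟨m, hmn⟩
  rw [if_neg (by simp)] at e1
  rw [if_pos (by simpa using hmm)] at e2
  exact absurd (e2.2.trans e1.1) (lt_irrefl _)

lemma null_level (a : ℝ) : volume {s : Fin n → ℝ | ∃ i, s i = a} = 0 := by
  have h : {s : Fin n → ℝ | ∃ i, s i = a} = ⋃ i : Fin n, {s : Fin n → ℝ | s i = a} := by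
    ext s; simp [mem_iUnion]
  rw [h, show (volume : Measure (Fin n → ℝ)) = Measure.pi fun _ => volume from volume_pi]
  exact measure_iUnion_null fun i => Measure.pi_hyperplane (fun _ : Fin n => (volume : Measure ℝ)) i a

lemma volume_simplex_lt_top (b : ℝ) :
    volume {s : Fin n → ℝ | (∀ i, s i ∈ Ioo 0 b) ∧ StrictMono s} < ⊤ := by
  refine lt_of_le_of_lt (measure_mono (fun s hs => ?_)) (?_ :
    volume (Set.pi univ fun _ : Fin n => Ioo (0 : ℝ) b) < ⊤)
  · exact fun i _ => hs.1 i
  · rw [volume_pi_pi]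
    exact ENNReal.prod_lt_top fun i _ => measure_Ioo_lt_top

lemma integrableOn_bdd {h : (Fin n → ℝ) → ℝ} (hm : Measurable h) {C : ℝ} (hC : ∀ x, |h x| ≤ C)
    {E : Set (Fin n → ℝ)} (hE : volume E ≠ ⊤) : IntegrableOn h E volume :=
  Measure.integrableOn_of_bounded hE hm.aestronglyMeasurable
    (ae_of_all _ fun x => by simpa [Real.norm_eq_abs] using hC x)

lemma integral_simplex_decomp [NeZero n] {a b : ℝ} (ha : 0 < a) (hab : a < b)
    {h : (Fin n → ℝ) → ℝ} (hm : Measurable h) {C : ℝ} (hC : ∀ x, |h x| ≤ C) :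
    ∫ s in {s : Fin n → ℝ | (∀ i, s i ∈ Ioo 0 b) ∧ StrictMono s}, h s
      = ∑ m ∈ Finset.range (n + 1), ∫ s in cutSet n a b m, h s := by
  have haeq : {s : Fin n → ℝ | (∀ i, s i ∈ Ioo 0 b) ∧ StrictMono s}
      =ᵐ[volume] ⋃ m ∈ Finset.range (n + 1), cutSet n a b m := by
    rw [ae_eq_set]
    constructor
    · refine measure_mono_null (fun s hs => ?_) (null_level a)
      by_contra hcon
      simp only [mem_setOf_eq, not_exists] at hcon
      obtain ⟨m, hm1, hm2⟩ := cutSet_cover hs.1 hcon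
      exact hs.2 (mem_iUnion₂.2 ⟨m, Finset.mem_range.2 (Nat.lt_succ_of_le hm1), hm2⟩)
    · have hsub : (⋃ m ∈ Finset.range (n + 1), cutSet n a b m)
          ⊆ {s : Fin n → ℝ | (∀ i, s i ∈ Ioo 0 b) ∧ StrictMono s} := by
        intro s hs
        obtain ⟨m, _, hm2⟩ := mem_iUnion₂.1 hs
        exact cutSet_subset ha hab m hm2
      rw [diff_eq_empty.2 hsub]
      simp
  rw [setIntegral_congr_set haeq]
  rw [integral_biUnion_finset]
  · exact fun m _ => measurableSet_cutSet a b m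
  · intro m hm1 m' hm2 hne
    simp only [Finset.coe_range, mem_Iio, Finset.mem_coe, Finset.mem_range] at hm1 hm2
    rcases lt_or_gt_of_ne hne with hlt | hgt
    · exact cutSet_disjoint hlt (by omega)
    · exact (cutSet_disjoint hgt (by omega)).symm
  · intro m _
    refine integrableOn_bdd hm hC (ne_of_lt ?_)
    exact lt_of_le_of_lt (measure_mono (cutSet_subset ha hab m)) (volume_simplex_lt_top b)

end OccShiftAux

open OccShiftAux
open Fin.NatCast

/-- The multi-occupation field is invariant under circular translation of based loops:
`⟨Θ_r l, f⟩ = ⟨l, f⟩` for every bounded measurable `f : Sⁿ → ℝ`. -/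
theorem occField_shift_invariant [MeasurableSpace S] [BorelSpace S]
    (l : BasedLoop S) (r : ℝ) (hr : r ∈ Ico 0 l.len)
    (n : ℕ) (f : (Fin n → S) → ℝ) (hf : Measurable f) (C : ℝ) (hC : ∀ z, |f z| ≤ C) :
    occField n (l.shift r).f (l.shift r).len f = occField n l.f l.len f := by
  obtain ⟨hr0, hrt⟩ := hr
  have hlf : Measurable l.f := measurable_basedLoop_f l
  rcases eq_or_lt_of_le hr0 with h0 | hr0
  · have hfeq : (l.shift r).f = l.f := by
      funext u
      simp [BasedLoop.shift, ← h0]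
    have hleq : (l.shift r).len = l.len := rfl
    rw [hfeq, hleq]
  rcases Nat.eq_zero_or_pos n with hn | hn
  · subst hn
    simp [occField]
  haveI : NeZero n := ⟨hn.ne'⟩
  set t := l.len with ht
  have hLHS : occField n (l.shift r).f (l.shift r).len f
      = ∑ j : Fin n, ∫ s in {s : Fin n → ℝ | (∀ i, s i ∈ Ioo 0 t) ∧ StrictMono s},
          f (fun i => l.f (s (i + j) + r)) := rfl
  have hRHS : occField n l.f l.len f
      = ∑ j : Fin n, ∫ s in {s : Fin n → ℝ | (∀ i, s i ∈ Ioo 0 t) ∧ StrictMono s},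
          f (fun i => l.f (s (i + j))) := rfl
  rw [hLHS, hRHS]
  -- measurability and bounds of the integrands
  have hmeas1 : ∀ j : Fin n, Measurable (fun s : Fin n → ℝ => f (fun i => l.f (s (i + j) + r))) :=
    fun j => hf.comp (measurable_pi_lambda _ fun i =>
      hlf.comp (by fun_prop))
  have hmeas2 : ∀ a : Fin n, Measurable (fun w : Fin n → ℝ => f (fun i => l.f (w (i + a)))) :=
    fun a => hf.comp (measurable_pi_lambda _ fun i => hlf.comp (measurable_pi_apply (i + a)))
  have hbd1 : ∀ j : Fin n, ∀ x : Fin n → ℝ, |(fun s : Fin n → ℝ =>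
      f (fun i => l.f (s (i + j) + r))) x| ≤ C := fun j x => hC _
  have hbd2 : ∀ a : Fin n, ∀ x : Fin n → ℝ, |(fun w : Fin n → ℝ =>
      f (fun i => l.f (w (i + a)))) x| ≤ C := fun a x => hC _
  -- the key change-of-variables step on each piece
  have key : ∀ (j : Fin n) (m : ℕ), m ≤ n →
      ∫ s in cutSet n (t - r) t m, f (fun i => l.f (s (i + j) + r))
        = ∫ w in cutSet n r t (n - m), f (fun i => l.f (w (i + (j - (m : Fin n))))) := by
    intro j m hm
    have step1 : (fun s : Fin n → ℝ => f (fun i => l.f (s (i + j) + r)))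
        = fun s => (fun w : Fin n → ℝ => f (fun i => l.f (w (i + (j - (m : Fin n))))))
            (tmap n (t - r) t m s) := by
      funext s
      congr 1
      funext i
      have hx : i + (j - (m : Fin n)) = (i + j) - (m : Fin n) := (add_sub_assoc _ _ _).symm
      rw [hx]
      set x := i + j with hxdef
      have hsub : x - (m : Fin n) = x + ((n - m : ℕ) : Fin n) := by
        rw [sub_eq_add_neg, neg_natCast hm]
      have hvx := val_add_natCast (Nat.sub_le n m) x
      rw [Nat.sub_sub_self hm] at hvx
      show l.f (s x + r) = l.f (tmap n (t - r) t m s (x - (m : Fin n)))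
      simp only [tmap]
      rw [sub_add_cancel, hsub, hvx]
      rcases lt_or_ge (x : ℕ) m with hxm | hxm
      · rw [if_pos hxm]
        rw [if_neg (not_lt.2 (Nat.le_add_left (n - m) (x : ℕ)))]
        rw [show t - (t - r) = r by ring]
      · have hxn := x.isLt
        rw [if_neg (not_lt.2 hxm)]
        have harith : ∀ yv nv mv : ℕ, mv ≤ yv → yv < nv → yv + (nv - mv) - nv < nv - mv := by
          intro yv nv mv h1 h2
          omega
        rw [if_pos (harith (x : ℕ) n m hxm hxn)]
        have hper := l.periodic (s x + -(t - r))
        rw [show s x + -(t - r) + l.len = s x + r by rw [← ht]; ring] at hper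
        exact hper
    calc ∫ s in cutSet n (t - r) t m, f (fun i => l.f (s (i + j) + r))
        = ∫ s in cutSet n (t - r) t m,
            (fun w : Fin n → ℝ => f (fun i => l.f (w (i + (j - (m : Fin n))))))
              (tmap n (t - r) t m s) := by rw [step1]
      _ = ∫ w in tmap n (t - r) t m '' cutSet n (t - r) t m,
            f (fun i => l.f (w (i + (j - (m : Fin n))))) :=
          ((tmap_measurePreserving (t - r) t m).setIntegral_image_emb
            (tmapEquiv (t - r) t hm).measurableEmbedding
            (fun w => f (fun i => l.f (w (i + (j - (m : Fin n))))))
            (cutSet n (t - r) t m)).symm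
      _ = ∫ w in cutSet n r t (n - m), f (fun i => l.f (w (i + (j - (m : Fin n))))) := by
          have himg := tmap_image (a := t - r) (b := t) (by linarith) (by linarith) hm
          rw [show t - (t - r) = r by ring] at himg
          rw [himg]
  calc ∑ j : Fin n, ∫ s in {s : Fin n → ℝ | (∀ i, s i ∈ Ioo 0 t) ∧ StrictMono s},
          f (fun i => l.f (s (i + j) + r))
      = ∑ j : Fin n, ∑ m ∈ Finset.range (n + 1), ∫ s in cutSet n (t - r) t m,
          f (fun i => l.f (s (i + j) + r)) := by
        refine Finset.sum_congr rfl fun j _ => ?_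
        exact integral_simplex_decomp (by linarith) (by linarith) (hmeas1 j) (hbd1 j)
    _ = ∑ j : Fin n, ∑ m ∈ Finset.range (n + 1), ∫ w in cutSet n r t (n - m),
          f (fun i => l.f (w (i + (j - (m : Fin n))))) := by
        refine Finset.sum_congr rfl fun j _ => Finset.sum_congr rfl fun m hm => ?_
        exact key j m (by simpa [Nat.lt_succ_iff] using hm)
    _ = ∑ m ∈ Finset.range (n + 1), ∑ j : Fin n, ∫ w in cutSet n r t (n - m),
          f (fun i => l.f (w (i + (j - (m : Fin n))))) := Finset.sum_comm
    _ = ∑ m ∈ Finset.range (n + 1), ∑ j : Fin n, ∫ w in cutSet n r t (n - m),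
          f (fun i => l.f (w (i + j))) := by
        refine Finset.sum_congr rfl fun m _ => ?_
        exact Fintype.sum_equiv (Equiv.subRight ((m : Fin n))) _ _ (fun j => rfl)
    _ = ∑ j : Fin n, ∑ m ∈ Finset.range (n + 1), ∫ w in cutSet n r t (n - m),
          f (fun i => l.f (w (i + j))) := Finset.sum_comm
    _ = ∑ j : Fin n, ∑ m ∈ Finset.range (n + 1), ∫ w in cutSet n r t m,
          f (fun i => l.f (w (i + j))) := by
        refine Finset.sum_congr rfl fun j _ => ?_
        have := Finset.sum_range_reflect
          (fun m => ∫ w in cutSet n r t m, f (fun i => l.f (w (i + j)))) (n + 1)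
        simpa using this
    _ = ∑ j : Fin n, ∫ s in {s : Fin n → ℝ | (∀ i, s i ∈ Ioo 0 t) ∧ StrictMono s},
          f (fun i => l.f (s (i + j))) := by
        refine Finset.sum_congr rfl fun j _ => ?_
        exact (integral_simplex_decomp hr0 hrt (hmeas2 j) (hbd2 j)).symm
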